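/- Let N ≥ 1, let Δ = diag(δ₁,…,δ_N) with δᵢ > 0 for all i, let x ∈ ℝᴺ with xᵢ ≠ 0 for all i, and let y ∈ ℝᴺ with yᵢ > 0 for all i. Suppose ∑_{i=1}^{N} (1/δᵢ)·[xᵢ yᵢ]₊ < 1, and set μ := 1 − ∑_{i=1}^{N} (1/δᵢ)·[xᵢ yᵢ]₊ > 0. Define the diagonal matrix D = diag(d₁,…,d_N) with dᵢ = yᵢ/|xᵢ|. Then the matrix A = −Δ + x yᵀ satisfies AᵀD + DA ⪯ −2μ·ΔD (i.e., AᵀD + DA + 2μΔD is negative semidefinite); in particular, A is diagonally stable with certificate D. -/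

import Mathlib

open Matrix

/-- A real square matrix `A` is *diagonally stable* if there exists a diagonal matrix `D`
with positive diagonal entries such that `Aᵀ D + D A` is negative definite. -/
def DiagonallyStable {n : Type*} [Fintype n] [DecidableEq n] (A : Matrix n n ℝ) : Prop :=
  ∃ d : n → ℝ, (∀ i, 0 < d i) ∧
    (-(Aᵀ * Matrix.diagonal d + Matrix.diagonal d * A)).PosDef

lemma aux_vecMulVec_mulVec {n : Type*} [Fintype n] (a b w : n → ℝ) :
    Matrix.vecMulVec a b *ᵥ w = (b ⬝ᵥ w) • a := by
  ext i
  simp [Matrix.vecMulVec_apply, Matrix.mulVec, dotProduct, Finset.mul_sum, mul_assoc,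
    mul_comm, mul_left_comm]

lemma aux_cs {ι : Type*} (s : Finset ι) (f t S : ι → ℝ)
    (ht : ∀ i ∈ s, 0 ≤ t i) (hS : ∀ i ∈ s, 0 ≤ S i) (hf : ∀ i ∈ s, f i ^ 2 ≤ t i * S i) :
    (∑ i ∈ s, f i) ^ 2 ≤ (∑ i ∈ s, t i) * (∑ i ∈ s, S i) := by
  have h1 : ∀ i ∈ s, |f i| ≤ Real.sqrt (t i) * Real.sqrt (S i) := by
    intro i hi
    rw [← Real.sqrt_mul (ht i hi)]
    have := Real.sqrt_le_sqrt (hf i hi)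
    rwa [Real.sqrt_sq_eq_abs] at this
  calc (∑ i ∈ s, f i) ^ 2 ≤ (∑ i ∈ s, |f i|) ^ 2 := by
        rw [← sq_abs (∑ i ∈ s, f i)]
        exact pow_le_pow_left₀ (abs_nonneg _) (Finset.abs_sum_le_sum_abs _ _) 2
    _ ≤ (∑ i ∈ s, Real.sqrt (t i) * Real.sqrt (S i)) ^ 2 := by
        apply pow_le_pow_left₀ (Finset.sum_nonneg fun i _ => abs_nonneg _)
        exact Finset.sum_le_sum h1
    _ ≤ (∑ i ∈ s, Real.sqrt (t i) ^ 2) * (∑ i ∈ s, Real.sqrt (S i) ^ 2) :=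
        Finset.sum_mul_sq_le_sq_mul_sq s _ _
    _ = (∑ i ∈ s, t i) * (∑ i ∈ s, S i) := by
        rw [Finset.sum_congr rfl fun i hi => Real.sq_sqrt (ht i hi),
          Finset.sum_congr rfl fun i hi => Real.sq_sqrt (hS i hi)]

lemma aux_quad {N : ℕ} (δ d x y : Fin N → ℝ) (v : Fin N → ℝ) :
    v ⬝ᵥ (((-(Matrix.diagonal δ) + Matrix.vecMulVec x y)ᵀ * Matrix.diagonal d
        + Matrix.diagonal d * (-(Matrix.diagonal δ) + Matrix.vecMulVec x y)) *ᵥ v)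
      = -(2 * ∑ i, δ i * d i * v i ^ 2)
        + 2 * ((∑ i, d i * x i * v i) * (∑ i, y i * v i)) := by
  have hT : (-(Matrix.diagonal δ) + Matrix.vecMulVec x y)ᵀ
      = -(Matrix.diagonal δ) + Matrix.vecMulVec y x := by
    ext i j
    by_cases h : i = j
    · simp [Matrix.transpose_apply, Matrix.diagonal_apply, Matrix.vecMulVec_apply, h, mul_comm]
    · simp [Matrix.transpose_apply, Matrix.diagonal_apply, Matrix.vecMulVec_apply, h,
        Ne.symm h, mul_comm]
  rw [hT, Matrix.add_mulVec, dotProduct_add, ← Matrix.mulVec_mulVec, ← Matrix.mulVec_mulVec,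
    Matrix.add_mulVec, Matrix.neg_mulVec, aux_vecMulVec_mulVec,
    Matrix.add_mulVec, Matrix.neg_mulVec, aux_vecMulVec_mulVec]
  simp only [dotProduct, Matrix.mulVec_diagonal, Pi.add_apply, Pi.neg_apply,
    Pi.smul_apply, smul_eq_mul]
  have e1 : ∑ i, v i * (d i * (-(δ i * v i) + (∑ j, y j * v j) * x i))
      = -(∑ i, δ i * d i * v i ^ 2) + (∑ i, d i * x i * v i) * (∑ j, y j * v j) := by
    simp only [mul_add, mul_neg]
    rw [Finset.sum_add_distrib, ← Finset.sum_neg_distrib, Finset.sum_mul]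
    congr 1
    · exact Finset.sum_congr rfl fun i _ => by ring
    · exact Finset.sum_congr rfl fun i _ => by ring
  have e2 : ∑ i, v i * (-(δ i * (d i * v i)) + (∑ j, x j * (d j * v j)) * y i)
      = -(∑ i, δ i * d i * v i ^ 2) + (∑ i, d i * x i * v i) * (∑ j, y j * v j) := by
    simp only [mul_add, mul_neg]
    rw [Finset.sum_add_distrib, ← Finset.sum_neg_distrib]
    have : (∑ j, x j * (d j * v j)) = ∑ i, d i * x i * v i :=
      Finset.sum_congr rfl fun i _ => by ring
    rw [this]
    have : ∑ i, v i * ((∑ i, d i * x i * v i) * y i)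
        = (∑ i, d i * x i * v i) * ∑ j, y j * v j := by
      rw [Finset.mul_sum]
      exact Finset.sum_congr rfl fun i _ => by ring
    rw [this]
    congr 1
    exact Finset.sum_congr rfl fun i _ => by ring
  rw [e1, e2]
  ring

lemma aux_quad_diag {N : ℕ} (δ d : Fin N → ℝ) (v : Fin N → ℝ) :
    v ⬝ᵥ ((Matrix.diagonal δ * Matrix.diagonal d) *ᵥ v) = ∑ i, δ i * d i * v i ^ 2 := by
  rw [← Matrix.mulVec_mulVec]
  simp only [dotProduct, Matrix.mulVec_diagonal]
  exact Finset.sum_congr rfl fun i _ => by ring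

/-- explicit diagonal Lyapunov certificate for the rank-1 case. -/
theorem rank1_explicit_certificate (N : ℕ) (hN : 1 ≤ N) (δ x y : Fin N → ℝ)
    (hδ : ∀ i, 0 < δ i) (hx : ∀ i, x i ≠ 0) (hy : ∀ i, 0 < y i)
    (hsum : ∑ i, (1 / δ i) * max (x i * y i) 0 < 1)
    (μ : ℝ) (hμ : μ = 1 - ∑ i, (1 / δ i) * max (x i * y i) 0)
    (d : Fin N → ℝ) (hd : ∀ i, d i = y i / |x i|)
    (A D Δ : Matrix (Fin N) (Fin N) ℝ)
    (hA : A = -(Matrix.diagonal δ) + Matrix.vecMulVec x y)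
    (hD : D = Matrix.diagonal d) (hΔ : Δ = Matrix.diagonal δ) :
    0 < μ ∧
    (-(Aᵀ * D + D * A + (2 * μ) • (Δ * D))).PosSemidef ∧
    (-(Aᵀ * D + D * A)).PosDef := by
  have hμpos : 0 < μ := by rw [hμ]; linarith
  have hdpos : ∀ i, 0 < d i := fun i => by
    rw [hd i]; exact div_pos (hy i) (abs_pos.mpr (hx i))
  set t : Fin N → ℝ := fun i => (1 / δ i) * max (x i * y i) 0 with ht_def
  have ht0 : ∀ i, 0 ≤ t i := fun i =>
    mul_nonneg (one_div_nonneg.mpr (hδ i).le) (le_max_right _ _)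
  have htsum : ∑ i, t i = 1 - μ := by rw [hμ]; ring
  -- pointwise key inequality
  have hkey : ∀ i, ((y i + d i * x i) / 2) ^ 2 ≤ t i * (δ i * d i) := by
    intro i
    rcases lt_or_gt_of_ne (hx i) with hxi | hxi
    · have habs : |x i| = -x i := abs_of_neg hxi
      have hdx : d i * x i = -y i := by
        rw [hd i, habs, div_neg, neg_mul, div_mul_cancel₀ _ (hx i)]
      have hmax : max (x i * y i) 0 = 0 :=
        max_eq_right (le_of_lt (mul_neg_of_neg_of_pos hxi (hy i)))
      rw [hdx, ht_def]
      simp [hmax]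
    · have habs : |x i| = x i := abs_of_pos hxi
      have hdx : d i * x i = y i := by
        rw [hd i, habs, div_mul_cancel₀ _ (hx i)]
      have hmax : max (x i * y i) 0 = x i * y i :=
        max_eq_left (le_of_lt (mul_pos hxi (hy i)))
      have hdi : d i = y i / x i := by rw [hd i, habs]
      rw [hdx, ht_def]
      simp only [hmax]
      rw [hdi]
      have : 1 / δ i * (x i * y i) * (δ i * (y i / x i)) = (δ i / δ i) * (x i / x i) * y i ^ 2 := by
        ring
      rw [div_self (hδ i).ne', div_self (hx i)] at this
      rw [show (1:ℝ) * 1 * y i ^ 2 = y i ^ 2 by ring] at this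
      rw [this]
      nlinarith [sq_nonneg (y i)]
  -- main scalar inequality
  have hmain : ∀ v : Fin N → ℝ,
      (∑ i, d i * x i * v i) * (∑ i, y i * v i)
        ≤ (1 - μ) * (∑ i, δ i * d i * v i ^ 2) := by
    intro v
    set P := ∑ i, y i * v i with hP
    set Q := ∑ i, d i * x i * v i with hQ
    set S := ∑ i, δ i * d i * v i ^ 2 with hS
    have hsumav : ∑ i, ((y i + d i * x i) / 2) * v i = (P + Q) / 2 := by
      rw [hP, hQ, Finset.sum_congr rfl (fun i _ => (by ring :
          ((y i + d i * x i) / 2) * v i = y i * v i / 2 + d i * x i * v i / 2)),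
        Finset.sum_add_distrib, ← Finset.sum_div, ← Finset.sum_div]
      ring
    have hcs : ((P + Q) / 2) ^ 2 ≤ (∑ i, t i) * S := by
      rw [← hsumav]
      refine aux_cs Finset.univ _ t (fun i => δ i * d i * v i ^ 2)
        (fun i _ => ht0 i)
        (fun i _ => mul_nonneg (mul_nonneg (hδ i).le (hdpos i).le) (sq_nonneg _))
        (fun i _ => ?_)
      calc (((y i + d i * x i) / 2) * v i) ^ 2
          = ((y i + d i * x i) / 2) ^ 2 * v i ^ 2 := by ring
        _ ≤ t i * (δ i * d i) * v i ^ 2 :=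
            mul_le_mul_of_nonneg_right (hkey i) (sq_nonneg _)
        _ = t i * (δ i * d i * v i ^ 2) := by ring
    have h1 : Q * P ≤ ((P + Q) / 2) ^ 2 := by nlinarith [sq_nonneg (P - Q)]
    calc Q * P ≤ ((P + Q) / 2) ^ 2 := h1
      _ ≤ (∑ i, t i) * S := hcs
      _ = (1 - μ) * S := by rw [htsum]
  subst hA hD hΔ
  have hΔD : Matrix.diagonal δ * Matrix.diagonal d
      = Matrix.diagonal (fun i => δ i * d i) := Matrix.diagonal_mul_diagonal δ d
  have hBsym : ((-(Matrix.diagonal δ) + Matrix.vecMulVec x y)ᵀ * Matrix.diagonal d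
      + Matrix.diagonal d * (-(Matrix.diagonal δ) + Matrix.vecMulVec x y)).IsHermitian := by
    show _ = _
    rw [Matrix.conjTranspose_eq_transpose_of_trivial, Matrix.transpose_add,
      Matrix.transpose_mul, Matrix.transpose_mul, Matrix.transpose_transpose,
      Matrix.diagonal_transpose, add_comm]
  have hSnn : ∀ v : Fin N → ℝ, 0 ≤ ∑ i, δ i * d i * v i ^ 2 := fun v =>
    Finset.sum_nonneg fun i _ =>
      mul_nonneg (mul_nonneg (hδ i).le (hdpos i).le) (sq_nonneg _)
  refine ⟨hμpos, Matrix.posSemidef_iff_dotProduct_mulVec.mpr ⟨?_, fun v => ?_⟩, Matrix.posDef_iff_dotProduct_mulVec.mpr ⟨hBsym.neg, fun v hv => ?_⟩⟩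
  · -- Hermitian of PSD matrix
    refine (hBsym.add ?_).neg
    rw [hΔD, ← Matrix.diagonal_smul]
    exact Matrix.isHermitian_diagonal _
  · -- PSD quadratic form
    rw [star_trivial, Matrix.neg_mulVec, dotProduct_neg, Matrix.add_mulVec,
      dotProduct_add, Matrix.smul_mulVec, dotProduct_smul,
      aux_quad, aux_quad_diag]
    have := hmain v
    have hSv := hSnn v
    simp only [smul_eq_mul]
    nlinarith [hμpos]
  · -- PD quadratic form
    rw [star_trivial, Matrix.neg_mulVec, dotProduct_neg, aux_quad]
    obtain ⟨i, hi⟩ := Function.ne_iff.mp hv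
    have hSpos : 0 < ∑ i, δ i * d i * v i ^ 2 :=
      Finset.sum_pos' (fun i _ =>
          mul_nonneg (mul_nonneg (hδ i).le (hdpos i).le) (sq_nonneg _))
        ⟨i, Finset.mem_univ i, mul_pos (mul_pos (hδ i) (hdpos i)) (pow_two_pos_of_ne_zero hi)⟩
    have := hmain v
    nlinarith [hμpos]
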